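/- (Identity (10) in the proof of Lemma 2.) Let f_n be the number of codewords of length n in the code D_2. Then for every n ≥ 7, f_{n−2} + f_{n−5} = 2 f_{n−3} + f_{n−6}. -/

import Mathlib

/-- The code `D₂`: the word `110` together with all binary words that do not begin
with `110`, end with the suffix `0110`, and contain `0110` only as that suffix. -/
def D2 : Set (List Bool) :=
  {w | w = [true, true, false] ∨
    (¬ [true, true, false] <+: w ∧
     [false, true, true, false] <:+ w ∧
     ∀ u v, w = u ++ [false, true, true, false] ++ v → v = [])}

/-- `f2 n` is the number of codewords of `D₂` of length `n`. -/
noncomputable def f2 (n : ℕ) : ℕ := Set.ncard {w ∈ D2 | w.length = n}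

namespace D2aux

/-- States of the automaton recognizing `D₂ \ {110}`. -/
inductive St | A | B | C | S0 | S1 | S2 | S3 | S4 | D
  deriving DecidableEq

instance : Fintype St where
  elems := {St.A, St.B, St.C, St.S0, St.S1, St.S2, St.S3, St.S4, St.D}
  complete := fun x => by cases x <;> simp

def step : St → Bool → St
  | .A, false => .S1
  | .A, true => .B
  | .B, false => .S1
  | .B, true => .C
  | .C, false => .D
  | .C, true => .S0
  | .S0, false => .S1
  | .S0, true => .S0
  | .S1, false => .S1
  | .S1, true => .S2
  | .S2, false => .S1
  | .S2, true => .S3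
  | .S3, false => .S4
  | .S3, true => .S0
  | .S4, _ => .D
  | .D, _ => .D

def run (w : List Bool) : St := w.foldl step .A

lemma run_snoc (w : List Bool) (b : Bool) : run (w ++ [b]) = step (run w) b := by
  simp [run, List.foldl_append]

/-- `w` contains the factor `0110`. -/
def Fac (w : List Bool) : Prop := ∃ u v, w = u ++ [false, true, true, false] ++ v

/-- `w` contains the factor `0110` not as a suffix. -/
def FacP (w : List Bool) : Prop := ∃ u v, w = u ++ [false, true, true, false] ++ v ∧ v ≠ []

def good (w : List Bool) : Prop := ¬ ([true, true, false] <+: w) ∧ ¬ Fac w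

def spec : St → List Bool → Prop
  | .A, w => w = []
  | .B, w => w = [true]
  | .C, w => w = [true, true]
  | .S0, w => good w ∧ w ≠ [] ∧ w ≠ [true] ∧ w ≠ [true, true] ∧
      ¬ ([false] <:+ w) ∧ ¬ ([false, true] <:+ w) ∧ ¬ ([false, true, true] <:+ w)
  | .S1, w => good w ∧ [false] <:+ w
  | .S2, w => good w ∧ [false, true] <:+ w
  | .S3, w => good w ∧ [false, true, true] <:+ w
  | .S4, w => ¬ ([true, true, false] <+: w) ∧ [false, true, true, false] <:+ w ∧
      ∀ u v, w = u ++ [false, true, true, false] ++ v → v = []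
  | .D, w => ([true, true, false] <+: w) ∨ FacP w

lemma suffix_snoc (s : List Bool) (c b : Bool) (w : List Bool) :
    (s ++ [c]) <:+ (w ++ [b]) ↔ c = b ∧ s <:+ w := by
  constructor
  · rintro ⟨u, hu⟩
    rw [← List.append_assoc] at hu
    obtain ⟨h1, h2⟩ := List.append_inj' hu (by simp)
    exact ⟨by injection h2, ⟨u, h1⟩⟩
  · rintro ⟨rfl, u, rfl⟩
    exact ⟨u, by simp⟩

lemma suffix1 (x b : Bool) (w : List Bool) : [x] <:+ (w ++ [b]) ↔ x = b := by
  simpa using suffix_snoc [] x b w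

lemma suffix2 (x y b : Bool) (w : List Bool) :
    [x, y] <:+ (w ++ [b]) ↔ y = b ∧ [x] <:+ w := suffix_snoc [x] y b w

lemma suffix3 (x y z b : Bool) (w : List Bool) :
    [x, y, z] <:+ (w ++ [b]) ↔ z = b ∧ [x, y] <:+ w := suffix_snoc [x, y] z b w

lemma suffix4 (x y z a b : Bool) (w : List Bool) :
    [x, y, z, a] <:+ (w ++ [b]) ↔ a = b ∧ [x, y, z] <:+ w := suffix_snoc [x, y, z] a b w

lemma snoc_eq_iff (w : List Bool) (b : Bool) (l : List Bool) (c : Bool) :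
    w ++ [b] = l ++ [c] ↔ w = l ∧ b = c := by
  constructor
  · intro h
    obtain ⟨h1, h2⟩ := List.append_inj' h (by simp)
    exact ⟨h1, by injection h2⟩
  · rintro ⟨rfl, rfl⟩; rfl

lemma fac_snoc (w : List Bool) (b : Bool) :
    Fac (w ++ [b]) ↔ Fac w ∨ [false, true, true, false] <:+ (w ++ [b]) := by
  constructor
  · rintro ⟨u, v, h⟩
    rcases List.eq_nil_or_concat v with rfl | ⟨L, c, rfl⟩
    · exact Or.inr ⟨u, by simpa using h.symm⟩
    · rw [List.concat_eq_append, ← List.append_assoc, snoc_eq_iff] at h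
      exact Or.inl ⟨u, L, by simpa using h.1⟩
  · rintro (⟨u, v, rfl⟩ | ⟨u, hu⟩)
    · exact ⟨u, v ++ [b], by simp⟩
    · exact ⟨u, [], by simp [← hu]⟩

lemma facP_snoc (w : List Bool) (b : Bool) : FacP (w ++ [b]) ↔ Fac w := by
  constructor
  · rintro ⟨u, v, h, hv⟩
    rcases List.eq_nil_or_concat v with rfl | ⟨L, c, rfl⟩
    · exact absurd rfl hv
    · rw [List.concat_eq_append, ← List.append_assoc, snoc_eq_iff] at h
      exact ⟨u, L, by simpa using h.1⟩
  · rintro ⟨u, v, rfl⟩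
    exact ⟨u, v ++ [b], by simp, by simp⟩

lemma fac_length {w : List Bool} (h : Fac w) : 4 ≤ w.length := by
  obtain ⟨u, v, rfl⟩ := h; simp; omega

lemma p110_snoc (w : List Bool) (b : Bool) :
    [true, true, false] <+: (w ++ [b]) ↔ [true, true, false] <+: w ∨ (w = [true, true] ∧ b = false) := by
  rw [List.prefix_concat_iff]
  constructor
  · rintro (h | h)
    · right
      have := (snoc_eq_iff w b [true, true] false).mp (by simpa using h.symm)
      exact this
    · exact Or.inl h
  · rintro (h | ⟨rfl, rfl⟩)
    · exact Or.inr h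
    · exact Or.inl rfl

lemma suff_confl {s1 s2 : List Bool} {w : List Bool} (h1 : s1 <:+ w) (h2 : s2 <:+ w)
    (hl : s1.length ≤ s2.length) : s1 <:+ s2 :=
  List.suffix_of_suffix_length_le h1 h2 hl

lemma spec_run (w : List Bool) : spec (run w) w := by
  induction w using List.reverseRecOn with
  | nil => simp [run, spec]
  | append_singleton w b ih =>
    rw [run_snoc]
    rcases hs : run w with _ | _ | _ | _ | _ | _ | _ | _ | _ <;> rw [hs] at ih <;>
      cases b
    -- A, false → S1
    · rw [show spec St.A w = (w = []) from rfl] at ih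
      subst ih
      refine ⟨⟨by decide, fun h => by have := fac_length h; simp at this⟩, by decide⟩
    -- A, true → B
    · rw [show spec St.A w = (w = []) from rfl] at ih
      subst ih; rfl
    -- B, false → S1
    · rw [show spec St.B w = (w = [true]) from rfl] at ih
      subst ih
      refine ⟨⟨by decide, fun h => by have := fac_length h; simp at this⟩, by decide⟩
    -- B, true → C
    · rw [show spec St.B w = (w = [true]) from rfl] at ih
      subst ih; rfl
    -- C, false → D
    · rw [show spec St.C w = (w = [true, true]) from rfl] at ih
      subst ih
      exact Or.inl (by decide)
    -- C, true → S0
    · rw [show spec St.C w = (w = [true, true]) from rfl] at ih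
      subst ih
      exact ⟨⟨by decide, fun h => by have := fac_length h; simp at this⟩,
        by decide, by decide, by decide, by decide, by decide, by decide⟩
    -- S0, false → S1
    · obtain ⟨⟨hp, hf⟩, _, _, h22, _, _, h3⟩ := ih
      refine ⟨⟨?_, ?_⟩, (suffix1 false false w).mpr rfl⟩
      · rw [p110_snoc]; rintro (h | ⟨rfl, _⟩) <;> [exact hp h; exact h22 rfl]
      · rw [fac_snoc]
        rintro (h | h)
        · exact hf h
        · exact h3 ((suffix4 false true true false false w).mp h).2
    -- S0, true → S0
    · obtain ⟨⟨hp, hf⟩, h0, h1, h2, e1, e2, _⟩ := ih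
      refine ⟨⟨?_, ?_⟩, by simp, ?_, ?_, ?_, ?_, ?_⟩
      · rw [p110_snoc]; rintro (h | ⟨_, h⟩) <;> [exact hp h; exact Bool.noConfusion h]
      · rw [fac_snoc]
        rintro (h | h)
        · exact hf h
        · exact Bool.noConfusion ((suffix4 false true true false true w).mp h).1
      · intro h
        obtain ⟨rfl, _⟩ := (snoc_eq_iff w true [] true).mp h
        exact h0 rfl
      · intro h
        obtain ⟨rfl, _⟩ := (snoc_eq_iff w true [true] true).mp h
        exact h1 rfl
      · intro h; exact Bool.noConfusion ((suffix1 false true w).mp h)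
      · intro h; exact e1 ((suffix2 false true true w).mp h).2
      · intro h; exact e2 ((suffix3 false true true true w).mp h).2
    -- S1, false → S1
    · obtain ⟨⟨hp, hf⟩, hsf⟩ := ih
      refine ⟨⟨?_, ?_⟩, (suffix1 false false w).mpr rfl⟩
      · rw [p110_snoc]
        rintro (h | ⟨rfl, _⟩) <;> [exact hp h; exact absurd hsf (by decide)]
      · rw [fac_snoc]
        rintro (h | h)
        · exact hf h
        · have := ((suffix4 false true true false false w).mp h).2
          have := suff_confl hsf this (by simp)
          exact absurd this (by decide)
    -- S1, true → S2
    · obtain ⟨⟨hp, hf⟩, hsf⟩ := ih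
      refine ⟨⟨?_, ?_⟩, (suffix2 false true true w).mpr ⟨rfl, hsf⟩⟩
      · rw [p110_snoc]; rintro (h | ⟨_, h⟩) <;> [exact hp h; exact Bool.noConfusion h]
      · rw [fac_snoc]
        rintro (h | h)
        · exact hf h
        · exact Bool.noConfusion ((suffix4 false true true false true w).mp h).1
    -- S2, false → S1
    · obtain ⟨⟨hp, hf⟩, hsf⟩ := ih
      refine ⟨⟨?_, ?_⟩, (suffix1 false false w).mpr rfl⟩
      · rw [p110_snoc]
        rintro (h | ⟨rfl, _⟩) <;> [exact hp h; exact absurd hsf (by decide)]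
      · rw [fac_snoc]
        rintro (h | h)
        · exact hf h
        · have := ((suffix4 false true true false false w).mp h).2
          have := suff_confl hsf this (by simp)
          exact absurd this (by decide)
    -- S2, true → S3
    · obtain ⟨⟨hp, hf⟩, hsf⟩ := ih
      refine ⟨⟨?_, ?_⟩, (suffix3 false true true true w).mpr ⟨rfl, hsf⟩⟩
      · rw [p110_snoc]; rintro (h | ⟨_, h⟩) <;> [exact hp h; exact Bool.noConfusion h]
      · rw [fac_snoc]
        rintro (h | h)
        · exact hf h
        · exact Bool.noConfusion ((suffix4 false true true false true w).mp h).1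
    -- S3, false → S4
    · obtain ⟨⟨hp, hf⟩, hsf⟩ := ih
      refine ⟨?_, (suffix4 false true true false false w).mpr ⟨rfl, hsf⟩, ?_⟩
      · rw [p110_snoc]
        rintro (h | ⟨rfl, _⟩) <;> [exact hp h; exact absurd hsf (by decide)]
      · intro u v h
        by_contra hv
        exact hf ((facP_snoc w false).mp ⟨u, v, h, hv⟩)
    -- S3, true → S0
    · obtain ⟨⟨hp, hf⟩, hsf⟩ := ih
      refine ⟨⟨?_, ?_⟩, by simp, ?_, ?_, ?_, ?_, ?_⟩
      · rw [p110_snoc]; rintro (h | ⟨_, h⟩) <;> [exact hp h; exact Bool.noConfusion h]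
      · rw [fac_snoc]
        rintro (h | h)
        · exact hf h
        · exact Bool.noConfusion ((suffix4 false true true false true w).mp h).1
      · intro h
        obtain ⟨rfl, _⟩ := (snoc_eq_iff w true [] true).mp h
        exact absurd hsf (by decide)
      · intro h
        obtain ⟨rfl, _⟩ := (snoc_eq_iff w true [true] true).mp h
        exact absurd hsf (by decide)
      · intro h; exact Bool.noConfusion ((suffix1 false true w).mp h)
      · intro h
        have := ((suffix2 false true true w).mp h).2
        have := suff_confl this hsf (by simp)
        exact absurd this (by decide)
      · intro h
        have := ((suffix3 false true true true w).mp h).2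
        have := suff_confl this hsf (by simp)
        exact absurd this (by decide)
    -- S4, false → D
    · obtain ⟨_, ⟨u, hu⟩, _⟩ := ih
      exact Or.inr ⟨u, [false], by simp [← hu], by simp⟩
    -- S4, true → D
    · obtain ⟨_, ⟨u, hu⟩, _⟩ := ih
      exact Or.inr ⟨u, [true], by simp [← hu], by simp⟩
    -- D, false → D
    · rcases ih with h | ⟨u, v, rfl, hv⟩
      · exact Or.inl (h.trans (List.prefix_append _ _))
      · exact Or.inr ⟨u, v ++ [false], by simp, by simp⟩
    -- D, true → D
    · rcases ih with h | ⟨u, v, rfl, hv⟩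
      · exact Or.inl (h.trans (List.prefix_append _ _))
      · exact Or.inr ⟨u, v ++ [true], by simp, by simp⟩

lemma mem_D2_iff (w : List Bool) : w ∈ D2 ↔ (w = [true, true, false] ∨ run w = .S4) := by
  constructor
  · rintro (rfl | ⟨hp, hsf, ho⟩)
    · exact Or.inl rfl
    · right
      have sp := spec_run w
      rcases h : run w with _ | _ | _ | _ | _ | _ | _ | _ | _ <;> rw [h] at sp
      · subst sp; exact absurd (hsf.length_le) (by decide)
      · subst sp; exact absurd (hsf.length_le) (by decide)
      · subst sp; exact absurd (hsf.length_le) (by decide)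
      · obtain ⟨u, hu⟩ := hsf
        exact absurd (⟨u, [], by simp [← hu]⟩ : Fac w) sp.1.2
      · obtain ⟨u, hu⟩ := hsf
        exact absurd (⟨u, [], by simp [← hu]⟩ : Fac w) sp.1.2
      · obtain ⟨u, hu⟩ := hsf
        exact absurd (⟨u, [], by simp [← hu]⟩ : Fac w) sp.1.2
      · obtain ⟨u, hu⟩ := hsf
        exact absurd (⟨u, [], by simp [← hu]⟩ : Fac w) sp.1.2
      · rcases sp with h' | ⟨u, v, h', hv⟩
        · exact absurd h' hp
        · exact absurd (ho u v h') hv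
  · rintro (rfl | h)
    · exact Or.inl rfl
    · have sp := spec_run w
      rw [h] at sp
      exact Or.inr sp

/-! ### Counting -/

def allW : ℕ → Finset (List Bool)
  | 0 => {[]}
  | n + 1 => (allW n).biUnion (fun w => {w ++ [false], w ++ [true]})

lemma mem_allW {n : ℕ} {w : List Bool} : w ∈ allW n ↔ w.length = n := by
  induction n generalizing w with
  | zero => simp [allW, List.length_eq_zero_iff]
  | succ n ih =>
    simp only [allW, Finset.mem_biUnion, Finset.mem_insert, Finset.mem_singleton]
    constructor
    · rintro ⟨a, ha, rfl | rfl⟩ <;> simp [ih.mp ha]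
    · intro hw
      rcases List.eq_nil_or_concat w with rfl | ⟨L, c, rfl⟩
      · simp at hw
      · refine ⟨L, ih.mpr ?_, ?_⟩
        · simp [List.concat_eq_append] at hw; omega
        · cases c <;> simp [List.concat_eq_append]

def cnt (n : ℕ) (s : St) : ℕ := ((allW n).filter (fun w => run w = s)).card

lemma cnt_succ (n : ℕ) (s : St) :
    cnt (n + 1) s = ((allW n).filter (fun w => step (run w) false = s)).card
      + ((allW n).filter (fun w => step (run w) true = s)).card := by
  have hdisj : ∀ x ∈ allW n, ∀ y ∈ allW n, x ≠ y →
      Disjoint (Finset.filter (fun w => run w = s) {x ++ [false], x ++ [true]})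
               (Finset.filter (fun w => run w = s) {y ++ [false], y ++ [true]}) := by
    intro x _ y _ hxy
    rw [Finset.disjoint_left]
    intro a ha hb
    simp only [Finset.mem_filter, Finset.mem_insert, Finset.mem_singleton] at ha hb
    rcases ha.1 with rfl | rfl <;> rcases hb.1 with h | h <;>
      exact hxy ((snoc_eq_iff _ _ _ _).mp h).1
  have hpair : ∀ x : List Bool,
      (Finset.filter (fun w => run w = s) {x ++ [false], x ++ [true]}).card
      = (if step (run x) false = s then 1 else 0)
        + (if step (run x) true = s then 1 else 0) := by
    intro x
    rw [Finset.card_filter, Finset.sum_pair (by simp : x ++ [false] ≠ x ++ [true]),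
      run_snoc, run_snoc]
  rw [cnt, allW, Finset.filter_biUnion, Finset.card_biUnion hdisj,
    Finset.sum_congr rfl (fun x _ => hpair x), Finset.sum_add_distrib,
    ← Finset.card_filter, ← Finset.card_filter]

lemma card_filter_run_mem (n : ℕ) (T : Finset St) :
    ((allW n).filter (fun w => run w ∈ T)).card = ∑ s ∈ T, cnt n s := by
  have h : (allW n).filter (fun w => run w ∈ T)
      = T.biUnion (fun s => (allW n).filter (fun w => run w = s)) := by
    ext w
    simp only [Finset.mem_filter, Finset.mem_biUnion]
    constructor
    · rintro ⟨hw, ht⟩; exact ⟨run w, ht, hw, rfl⟩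
    · rintro ⟨s, hs, hw, rfl⟩; exact ⟨hw, hs⟩
  rw [h, Finset.card_biUnion]
  · rfl
  · intro x _ y _ hxy
    rw [Function.onFun, Finset.disjoint_left]
    intro a ha hb
    simp only [Finset.mem_filter] at ha hb
    exact hxy (ha.2.symm.trans hb.2)

lemma cnt_succ' (n : ℕ) (s : St) (T0 T1 : Finset St)
    (h0 : ∀ x : St, step x false = s ↔ x ∈ T0)
    (h1 : ∀ x : St, step x true = s ↔ x ∈ T1) :
    cnt (n + 1) s = (∑ s' ∈ T0, cnt n s') + (∑ s' ∈ T1, cnt n s') := by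
  rw [cnt_succ, Finset.filter_congr (fun w _ => h0 (run w)),
    Finset.filter_congr (fun w _ => h1 (run w)),
    card_filter_run_mem, card_filter_run_mem]

lemma cntA_succ (n : ℕ) : cnt (n + 1) St.A = 0 := by
  rw [cnt_succ' n St.A ∅ ∅ (by decide) (by decide)]
  simp

lemma cntB_succ (n : ℕ) : cnt (n + 1) St.B = cnt n St.A := by
  rw [cnt_succ' n St.B ∅ {St.A} (by decide) (by decide)]
  simp

lemma cntC_succ (n : ℕ) : cnt (n + 1) St.C = cnt n St.B := by
  rw [cnt_succ' n St.C ∅ {St.B} (by decide) (by decide)]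
  simp

lemma cntS0_succ (n : ℕ) : cnt (n + 1) St.S0 = cnt n St.C + cnt n St.S0 + cnt n St.S3 := by
  rw [cnt_succ' n St.S0 ∅ {St.C, St.S0, St.S3} (by decide) (by decide)]
  rw [Finset.sum_empty, Finset.sum_insert (by decide), Finset.sum_insert (by decide),
    Finset.sum_singleton]
  omega

lemma cntS1_succ (n : ℕ) :
    cnt (n + 1) St.S1 = cnt n St.A + cnt n St.B + cnt n St.S0 + cnt n St.S1 + cnt n St.S2 := by
  rw [cnt_succ' n St.S1 {St.A, St.B, St.S0, St.S1, St.S2} ∅ (by decide) (by decide)]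
  rw [Finset.sum_empty, Finset.sum_insert (by decide), Finset.sum_insert (by decide),
    Finset.sum_insert (by decide), Finset.sum_insert (by decide), Finset.sum_singleton]
  omega

lemma cntS2_succ (n : ℕ) : cnt (n + 1) St.S2 = cnt n St.S1 := by
  rw [cnt_succ' n St.S2 ∅ {St.S1} (by decide) (by decide)]
  simp

lemma cntS3_succ (n : ℕ) : cnt (n + 1) St.S3 = cnt n St.S2 := by
  rw [cnt_succ' n St.S3 ∅ {St.S2} (by decide) (by decide)]
  simp

lemma cntS4_succ (n : ℕ) : cnt (n + 1) St.S4 = cnt n St.S3 := by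
  rw [cnt_succ' n St.S4 {St.S3} ∅ (by decide) (by decide)]
  simp

lemma cnt_zero (s : St) : cnt 0 s = if St.A = s then 1 else 0 := by
  rw [cnt, show allW 0 = {[]} from rfl, Finset.filter_singleton]
  by_cases h : St.A = s
  · rw [if_pos (show run [] = s from h), if_pos h, Finset.card_singleton]
  · rw [if_neg (show ¬ run [] = s from h), if_neg h, Finset.card_empty]

lemma cntA_eq (n : ℕ) : cnt n St.A = if n = 0 then 1 else 0 := by
  cases n with
  | zero => simp [cnt_zero]
  | succ n => simp [cntA_succ]

lemma cntB_eq (n : ℕ) : cnt n St.B = if n = 1 then 1 else 0 := by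
  cases n with
  | zero => simp [cnt_zero]
  | succ n => rw [cntB_succ, cntA_eq]; simp

lemma cntC_eq (n : ℕ) : cnt n St.C = if n = 2 then 1 else 0 := by
  cases n with
  | zero => simp [cnt_zero]
  | succ n => rw [cntC_succ, cntB_eq]; simp

lemma key (m : ℕ) :
    cnt (m + 5) St.S1 + cnt (m + 2) St.S1 = 2 * cnt (m + 4) St.S1 + cnt (m + 1) St.S1 := by
  have e1 := cntS1_succ (m + 4)
  have e2 := cntS1_succ (m + 3)
  have e3 := cntS0_succ (m + 3)
  have e4 := cntS2_succ (m + 3)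
  have e5 := cntS2_succ (m + 2)
  have e6 := cntS3_succ (m + 2)
  have e7 := cntS2_succ (m + 1)
  have hA1 : cnt (m + 4) St.A = 0 := by simp [cntA_eq]
  have hA2 : cnt (m + 3) St.A = 0 := by simp [cntA_eq]
  have hB1 : cnt (m + 4) St.B = 0 := by simp [cntB_eq]
  have hB2 : cnt (m + 3) St.B = 0 := by simp [cntB_eq]
  have hC : cnt (m + 3) St.C = 0 := by simp [cntC_eq]
  simp only [show m + 4 + 1 = m + 5 from rfl, show m + 3 + 1 = m + 4 from rfl,
    show m + 2 + 1 = m + 3 from rfl, show m + 1 + 1 = m + 2 from rfl] at e1 e2 e3 e4 e5 e6 e7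
  omega

lemma cntS4_eq (j : ℕ) : cnt (j + 3) St.S4 = cnt j St.S1 := by
  rw [show j + 3 = (j + 2) + 1 from rfl, cntS4_succ,
    show j + 2 = (j + 1) + 1 from rfl, cntS3_succ, cntS2_succ]

lemma f2_eq (n : ℕ) : f2 n = cnt n St.S4 + (if n = 3 then 1 else 0) := by
  have hset : {w ∈ D2 | w.length = n}
      = ↑((allW n).filter (fun w => run w = St.S4 ∨ w = [true, true, false])) := by
    ext w
    simp only [Set.mem_setOf_eq, Finset.coe_filter, mem_allW]
    rw [mem_D2_iff]
    tauto
  have hdisj : Disjoint ((allW n).filter (fun w => run w = St.S4))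
      ((allW n).filter (fun w => w = [true, true, false])) := by
    rw [Finset.disjoint_left]
    intro a ha hb
    simp only [Finset.mem_filter] at ha hb
    rw [hb.2] at ha
    exact absurd ha.2 (by decide)
  have h110 : ((allW n).filter (fun w => w = [true, true, false])).card
      = if n = 3 then 1 else 0 := by
    rw [Finset.filter_eq']
    by_cases h : n = 3
    · subst h
      rw [if_pos ((mem_allW (n := 3) (w := [true, true, false])).mpr rfl), if_pos rfl,
        Finset.card_singleton]
    · rw [if_neg (fun hmem => h ((mem_allW (n := n) (w := [true, true, false])).mp hmem).symm),
        if_neg h, Finset.card_empty]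
  rw [f2, hset, Set.ncard_coe_finset, Finset.filter_or,
    Finset.card_union_of_disjoint hdisj, h110]
  rfl

end D2aux

open D2aux in
theorem d2_count_identity (n : ℕ) (hn : 7 ≤ n) :
    f2 (n - 2) + f2 (n - 5) = 2 * f2 (n - 3) + f2 (n - 6) := by
  obtain ⟨k, rfl⟩ := Nat.exists_eq_add_of_le hn
  have h2 : 7 + k - 2 = k + 5 := by omega
  have h5 : 7 + k - 5 = k + 2 := by omega
  have h3 : 7 + k - 3 = k + 4 := by omega
  have h6 : 7 + k - 6 = k + 1 := by omega
  rw [h2, h5, h3, h6, f2_eq, f2_eq, f2_eq, f2_eq]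
  -- small values of the S1-counts
  have c0 : ∀ s, s ≠ St.A → cnt 0 s = 0 := by
    intro s hs; rw [cnt_zero, if_neg (fun h => hs h.symm)]
  have cA0 : cnt 0 St.A = 1 := by rw [cnt_zero]; rfl
  have t0 : cnt 0 St.S1 = 0 := c0 _ (by decide)
  have t1 : cnt 1 St.S1 = 1 := by
    rw [show (1:ℕ) = 0 + 1 from rfl, cntS1_succ, cA0, c0 _ (by decide), c0 _ (by decide),
      t0, c0 St.S2 (by decide)]
  have z1 : cnt 1 St.S0 = 0 := by
    rw [show (1:ℕ) = 0 + 1 from rfl, cntS0_succ, c0 _ (by decide), c0 _ (by decide),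
      c0 _ (by decide)]
  have s2_1 : cnt 1 St.S2 = 0 := by
    rw [show (1:ℕ) = 0 + 1 from rfl, cntS2_succ, t0]
  have s3_1 : cnt 1 St.S3 = 0 := by
    rw [show (1:ℕ) = 0 + 1 from rfl, cntS3_succ, c0 _ (by decide)]
  have t2 : cnt 2 St.S1 = 2 := by
    rw [show (2:ℕ) = 1 + 1 from rfl, cntS1_succ, cntA_eq, cntB_eq, z1, t1, s2_1]; norm_num
  have z2 : cnt 2 St.S0 = 0 := by
    rw [show (2:ℕ) = 1 + 1 from rfl, cntS0_succ, cntC_eq, z1, s3_1]; norm_num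
  have s2_2 : cnt 2 St.S2 = 1 := by
    rw [show (2:ℕ) = 1 + 1 from rfl, cntS2_succ, t1]
  have s3_2 : cnt 2 St.S3 = 0 := by
    rw [show (2:ℕ) = 1 + 1 from rfl, cntS3_succ, s2_1]
  have t3 : cnt 3 St.S1 = 3 := by
    rw [show (3:ℕ) = 2 + 1 from rfl, cntS1_succ, cntA_eq, cntB_eq, z2, t2, s2_2]; norm_num
  have z3 : cnt 3 St.S0 = 1 := by
    rw [show (3:ℕ) = 2 + 1 from rfl, cntS0_succ, cntC_eq, z2, s3_2]; norm_num
  have s2_3 : cnt 3 St.S2 = 2 := by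
    rw [show (3:ℕ) = 2 + 1 from rfl, cntS2_succ, t2]
  have t4 : cnt 4 St.S1 = 6 := by
    rw [show (4:ℕ) = 3 + 1 from rfl, cntS1_succ, cntA_eq, cntB_eq, z3, t3, s2_3]; norm_num
  -- small values of the S4-counts
  have u1 : cnt 1 St.S4 = 0 := by
    rw [show (1:ℕ) = 0 + 1 from rfl, cntS4_succ, c0 _ (by decide)]
  have u2 : cnt 2 St.S4 = 0 := by
    rw [show (2:ℕ) = 1 + 1 from rfl, cntS4_succ, s3_1]
  have u3 : cnt 3 St.S4 = 0 := cntS4_eq 0 ▸ t0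
  have hS4_4 : cnt 4 St.S4 = cnt 1 St.S1 := cntS4_eq 1
  have hS4_5 : cnt 5 St.S4 = cnt 2 St.S1 := cntS4_eq 2
  have hS4_6 : cnt 6 St.S4 = cnt 3 St.S1 := cntS4_eq 3
  have hS4_7 : cnt 7 St.S4 = cnt 4 St.S1 := cntS4_eq 4
  by_cases hk3 : 3 ≤ k
  · obtain ⟨j, rfl⟩ := Nat.exists_eq_add_of_le hk3
    simp only [show 3 + j + 5 = (j + 5) + 3 by omega, show 3 + j + 2 = (j + 2) + 3 by omega,
      show 3 + j + 4 = (j + 4) + 3 by omega, show 3 + j + 1 = (j + 1) + 3 by omega]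
    rw [cntS4_eq, cntS4_eq, cntS4_eq, cntS4_eq,
      if_neg (show ¬((j + 5) + 3 = 3) by omega), if_neg (show ¬((j + 2) + 3 = 3) by omega),
      if_neg (show ¬((j + 4) + 3 = 3) by omega), if_neg (show ¬((j + 1) + 3 = 3) by omega)]
    have hk := key j
    omega
  · interval_cases k
    · norm_num [hS4_5, hS4_4, t1, t2, u1, u2]
    · norm_num [hS4_6, hS4_5, t2, t3, u2, u3]
    · norm_num [hS4_7, hS4_6, hS4_4, t1, t3, t4, u3]
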